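/- For fixed N ≥ 0, the function η ↦ Q^att_FKG(η,N) := log₂(η/(1-η)) + h((1-η)N) - h(ηN) is monotonically nondecreasing in η on (1/2, 1), where h(x) := (x+1)log₂(x+1) - x log₂(x) with h(0)=0. -/

import Mathlib

noncomputable def bosonicH (x : ℝ) : ℝ :=
  (x + 1) * Real.logb 2 (x + 1) - x * Real.logb 2 x

noncomputable def auxG (N t : ℝ) : ℝ :=
  Real.log t - ((t * N + 1) * Real.log (t * N + 1) - t * N * Real.log (t * N))

lemma auxG_hasDerivAt (N : ℝ) (hN : 0 < N) {t : ℝ} (ht : 0 < t) :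
    HasDerivAt (auxG N)
      (t⁻¹ - ((Real.log (t * N + 1) + 1) * N - (Real.log (t * N) + 1) * N)) t := by
  have htN : 0 < t * N := mul_pos ht hN
  have haff : HasDerivAt (fun s : ℝ => s * N + 1) N t := by
    simpa using ((hasDerivAt_id t).mul_const N).add_const 1
  have haff2 : HasDerivAt (fun s : ℝ => s * N) N t := by
    simpa using (hasDerivAt_id t).mul_const N
  have h2 : HasDerivAt (fun s : ℝ => (s * N + 1) * Real.log (s * N + 1))
      ((Real.log (t * N + 1) + 1) * N) t := by
    have := (Real.hasDerivAt_mul_log (x := t * N + 1) (by positivity)).comp t haff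
    simpa [Function.comp_def] using this
  have h3 : HasDerivAt (fun s : ℝ => s * N * Real.log (s * N))
      ((Real.log (t * N) + 1) * N) t := by
    have := (Real.hasDerivAt_mul_log (x := t * N) htN.ne').comp t haff2
    simpa [Function.comp_def] using this
  exact (Real.hasDerivAt_log ht.ne').sub (h2.sub h3)

lemma auxG_monotone (N : ℝ) (hN : 0 < N) : MonotoneOn (auxG N) (Set.Ioi 0) := by
  have hint : interior (Set.Ioi (0:ℝ)) = Set.Ioi 0 := interior_Ioi
  apply monotoneOn_of_deriv_nonneg (convex_Ioi 0)
  · intro t ht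
    exact (auxG_hasDerivAt N hN ht).continuousAt.continuousWithinAt
  · intro t ht
    rw [hint] at ht
    exact (auxG_hasDerivAt N hN ht).differentiableAt.differentiableWithinAt
  · intro t ht
    rw [hint] at ht
    have ht : (0:ℝ) < t := ht
    have htN : 0 < t * N := mul_pos ht hN
    rw [(auxG_hasDerivAt N hN ht).deriv]
    have hlog : Real.log (t * N + 1) - Real.log (t * N) ≤ (t * N)⁻¹ := by
      rw [← Real.log_div (by positivity) htN.ne']
      have := Real.log_le_sub_one_of_pos (x := (t * N + 1) / (t * N)) (by positivity)
      calc Real.log ((t * N + 1) / (t * N)) ≤ (t * N + 1) / (t * N) - 1 := this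
        _ = (t * N)⁻¹ := by field_simp; ring
    have : (Real.log (t * N + 1) + 1) * N - (Real.log (t * N) + 1) * N
        = N * (Real.log (t * N + 1) - Real.log (t * N)) := by ring
    rw [this]
    have h2 : N * (Real.log (t * N + 1) - Real.log (t * N)) ≤ N * (t * N)⁻¹ :=
      mul_le_mul_of_nonneg_left hlog hN.le
    have h3 : N * (t * N)⁻¹ = t⁻¹ := by field_simp [mul_comm]
    linarith

theorem QattFKG_monotone_in_eta
    (N : ℝ) (hN : 0 ≤ N) :
    MonotoneOn (fun η : ℝ =>
        Real.logb 2 (η / (1 - η)) + bosonicH ((1 - η) * N) - bosonicH (η * N))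
      (Set.Ioo (1 / 2 : ℝ) 1) := by
  rcases eq_or_lt_of_le hN with hN0 | hNpos
  · -- N = 0
    subst hN0
    intro a ha b hb hab
    simp only [mul_zero, sub_self, add_zero]
    have ha0 : 0 < a := lt_trans (by norm_num) ha.1
    have hb0 : 0 < b := lt_trans (by norm_num) hb.1
    have ha1 : 0 < 1 - a := by linarith [ha.2]
    have hb1 : 0 < 1 - b := by linarith [hb.2]
    have hdiv : a / (1 - a) ≤ b / (1 - b) :=
      div_le_div₀ hb0.le hab hb1 (by linarith)
    have := Real.logb_le_logb_of_le (b := 2) (by norm_num) (by positivity) hdiv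
    linarith
  · -- N > 0
    have key : ∀ η ∈ Set.Ioo (1/2 : ℝ) 1,
        Real.logb 2 (η / (1 - η)) + bosonicH ((1 - η) * N) - bosonicH (η * N)
          = (auxG N η - auxG N (1 - η)) / Real.log 2 := by
      intro η hη
      have h0 : 0 < η := lt_trans (by norm_num) hη.1
      have h1 : 0 < 1 - η := by linarith [hη.2]
      simp only [bosonicH, auxG, Real.logb, Real.log_div h0.ne' h1.ne']
      ring
    intro a ha b hb hab
    simp only
    rw [key a ha, key b hb]
    have ha0 : (0:ℝ) < a := lt_trans (by norm_num) ha.1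
    have hb1a : (0:ℝ) < 1 - a := by linarith [ha.2]
    have hb0 : (0:ℝ) < b := lt_trans (by norm_num) hb.1
    have hb1 : (0:ℝ) < 1 - b := by linarith [hb.2]
    have hG1 : auxG N a ≤ auxG N b := auxG_monotone N hNpos ha0 hb0 hab
    have hG2 : auxG N (1 - b) ≤ auxG N (1 - a) :=
      auxG_monotone N hNpos hb1 hb1a (by linarith)
    have hlog2 : (0:ℝ) < Real.log 2 := Real.log_pos (by norm_num)
    gcongr
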